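/- arXiv:1510.07202 — 2 statements merged into one kernel-verified Lean document; each statement's English description precedes it below -/
import Mathlib

section
/- If g is an order (viewed as a function ℕ → ℕ) that dominates all computable orders (i.e., for every computable order h, g(n) ≥ h(n) for almost every n), then g⁻¹ is an order that is dominated by all computable orders (i.e., for every computable order h, g⁻¹(n) ≤ h(n) for almost every n). -/
/-- An order: a non-decreasing, unbounded function `ℕ → ℕ` with value `0` at `0`. -/
def IsOrder (f : ℕ → ℕ) : Prop :=
  Monotone f ∧ (∀ m, ∃ n, m ≤ f n) ∧ f 0 = 0

/-- A computable order. -/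
def ComputableOrder (f : ℕ → ℕ) : Prop :=
  Computable f ∧ IsOrder f

/-- Generalized inverse of an order: `ordInv g k = min {m | g m ≥ k}`. -/
noncomputable def ordInv (g : ℕ → ℕ) (k : ℕ) : ℕ := sInf {m | k ≤ g m}

/-- `Nat.find` of a computable total predicate is computable. -/
lemma computable_nat_find (p : ℕ → ℕ → Prop) [∀ m k, Decidable (p m k)]
    (hp : Computable₂ fun m k => decide (p m k)) (H : ∀ m, ∃ k, p m k) :
    Computable fun m => Nat.find (H m) := by
  have hpr : Partrec fun m => Nat.rfind fun k => (Part.some (decide (p m k))) := by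
    apply Partrec.rfind
    exact (hp.partrec₂).of_eq (fun m => rfl)
  apply hpr.of_eq_tot
  intro m
  refine Nat.mem_rfind.2 ?_
  constructor
  · simpa using Nat.find_spec (H m)
  · intro k hk
    simpa using Nat.find_min (H m) hk

theorem stmt2 (g : ℕ → ℕ) (hg : IsOrder g)
    (hdom : ∀ h, ComputableOrder h → ∀ᶠ n in Filter.atTop, h n ≤ g n) :
    IsOrder (ordInv g) ∧
      ∀ h, ComputableOrder h → ∀ᶠ n in Filter.atTop, ordInv g n ≤ h n := by
  obtain ⟨gmono, gunb, g0⟩ := hg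
  have hne : ∀ k, {m | k ≤ g m}.Nonempty := fun k => gunb k
  have hinv_mono : Monotone (ordInv g) := by
    intro a b hab
    exact csInf_le_csInf (OrderBot.bddBelow _) (hne b)
      (fun m hm => le_trans hab hm)
  have hinv_unb : ∀ m, ∃ n, m ≤ ordInv g n := by
    intro m
    refine ⟨g m + 1, ?_⟩
    have hmem : ordInv g (g m + 1) ∈ {j | g m + 1 ≤ g j} := Nat.sInf_mem (hne _)
    have hmem' : g m + 1 ≤ g (ordInv g (g m + 1)) := hmem
    by_contra hlt
    push_neg at hlt
    have : g (ordInv g (g m + 1)) ≤ g m := gmono (Nat.le_of_lt_succ (by omega))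
    omega
  have hinv0 : ordInv g 0 = 0 := Nat.sInf_eq_zero.2 (Or.inl (by simp))
  refine ⟨⟨hinv_mono, hinv_unb, hinv0⟩, ?_⟩
  intro h ⟨hcomp, hmono, hunb, h0⟩
  -- strict inverse of h (patched to be 0 at 0)
  have HK : ∀ m, ∃ k, m + 1 ≤ h k ∨ m = 0 := fun m => (hunb (m + 1)).imp fun k hk => Or.inl hk
  set K : ℕ → ℕ := fun m => Nat.find (HK m) with hKdef
  have Kcomp : Computable K := by
    apply computable_nat_find
    have c1 : Computable fun p : ℕ × ℕ => decide (p.1 + 1 ≤ h p.2) :=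
      Primrec.nat_le.decide.to_comp.comp (Computable.succ.comp Computable.fst)
        (hcomp.comp Computable.snd)
    have c2 : Computable fun p : ℕ × ℕ => decide (p.1 = 0) :=
      (Primrec.eq.comp Primrec.fst (Primrec.const 0)).decide.to_comp
    have c3 : Computable fun p : ℕ × ℕ =>
        (decide (p.1 + 1 ≤ h p.2) || decide (p.1 = 0)) :=
      Primrec.or.to_comp.comp c1 c2
    exact (Computable.to₂ c3).of_eq (by intro m; simp)
  have K0 : K 0 = 0 := Nat.find_eq_zero (HK 0) |>.2 (Or.inr rfl)
  have Kmono : Monotone K := by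
    intro a b hab
    apply Nat.find_mono
    rintro k (hk | hk)
    · exact Or.inl (by omega)
    · subst hk; exact Or.inr (by omega)
  have Kunb : ∀ m, ∃ n, m ≤ K n := by
    intro m
    refine ⟨h m + 1, ?_⟩
    rw [Nat.le_find_iff]
    intro k hk
    rintro (hk2 | hk2)
    · have := hmono (le_of_lt hk); omega
    · omega
  have Kstrict : ∀ n, 1 ≤ h n → n < K (h n) := by
    intro n hn
    by_contra hle
    push_neg at hle
    have hspec := Nat.find_spec (HK (h n))
    rcases hspec with hs | hs
    · have hs' : h n + 1 ≤ h (K (h n)) := hs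
      have : h (K (h n)) ≤ h n := hmono hle
      omega
    · omega
  have hKdom := hdom K ⟨Kcomp, Kmono, Kunb, K0⟩
  rw [Filter.eventually_atTop] at hKdom ⊢
  obtain ⟨N, hN⟩ := hKdom
  obtain ⟨M, hM⟩ := hunb (max N 1)
  refine ⟨M, fun n hn => ?_⟩
  have hhn : max N 1 ≤ h n := le_trans hM (hmono hn)
  have h1 : n < K (h n) := Kstrict n (le_trans (le_max_right N 1) hhn)
  have h2 : K (h n) ≤ g (h n) := hN _ (le_trans (le_max_left N 1) hhn)
  have : n ≤ g (h n) := by omega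
  exact Nat.sInf_le this
end

section
/- Let μ be a computable, continuous measure on 2^ω and let X be μ-Martin-Löf random. Then there is a constant c such that KA(X↾g_μ(n)) ≥ n − c for every n, and consequently KA(X↾n) ≥ g_μ⁻¹(n) − c for every n. -/
open MeasureTheory
open Filter

/-- The length-`n` initial segment of an infinite binary sequence, as a list. -/
def strTake (X : ℕ → Bool) (n : ℕ) : List Bool := (List.range n).map X

/-- A semi-measure on binary strings: `m ε = 1`, nonnegative, and superadditive
on the two one-bit extensions. -/
def IsSemiMeasure (m : List Bool → ℝ) : Prop :=
  m [] = 1 ∧ (∀ σ, 0 ≤ m σ) ∧ ∀ σ, m (σ ++ [false]) + m (σ ++ [true]) ≤ m σ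

/-- A function on strings is left-c.e. if it is the limit of a computable,
non-decreasing sequence of dyadic rational approximations from below. -/
def IsLeftCE (m : List Bool → ℝ) : Prop :=
  ∃ f : List Bool × ℕ → ℕ, Computable f ∧
    (∀ σ, Monotone fun i => (f (σ, i) : ℝ) / 2 ^ i) ∧
    ∀ σ, Tendsto (fun i => (f (σ, i) : ℝ) / 2 ^ i) atTop (nhds (m σ))

/-- A universal left-c.e. semi-measure: multiplicatively dominates every
left-c.e. semi-measure. -/
def IsUniversalSemiMeasure (M : List Bool → ℝ) : Prop :=
  IsSemiMeasure M ∧ IsLeftCE M ∧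
    ∀ ρ, IsSemiMeasure ρ → IsLeftCE ρ → ∃ c : ℕ, ∀ σ, ρ σ ≤ 2 ^ c * M σ

/-- A priori complexity with respect to the semi-measure `M`: `KA σ = -log₂ M(σ)`. -/
noncomputable def KA (M : List Bool → ℝ) (σ : List Bool) : ℝ := - Real.logb 2 (M σ)


/-- The basic open cylinder of a binary string in Cantor space. -/
def cyl (σ : List Bool) : Set (ℕ → Bool) := {X | strTake X σ.length = σ}

/-- A measure on Cantor space is computable if the values of the cylinders can be
uniformly approximated to any precision `2⁻ⁱ` by a computable function
(with dyadic rational values `f(σ,i)/2ⁱ`). -/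
def ComputableMeasure (μ : Measure (ℕ → Bool)) : Prop :=
  ∃ f : List Bool × ℕ → ℕ, Computable f ∧
    ∀ σ i, |(μ (cyl σ)).toReal - (f (σ, i) : ℝ) / 2 ^ i| ≤ (2 : ℝ)⁻¹ ^ i

/-- A `μ`-Martin-Löf test: a uniformly c.e. sequence of sets of strings generating
open sets whose `μ`-measures are bounded by `2⁻ⁱ`. -/
def MLTest (μ : Measure (ℕ → Bool)) (V : ℕ → Set (List Bool)) : Prop :=
  REPred (fun p : ℕ × List Bool => p.2 ∈ V p.1) ∧
    ∀ i, μ (⋃ σ ∈ V i, cyl σ) ≤ 2⁻¹ ^ i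

/-- `X` is `μ`-Martin-Löf random if it passes every `μ`-Martin-Löf test. -/
def MLRandom (μ : Measure (ℕ → Bool)) (X : ℕ → Bool) : Prop :=
  ∀ V, MLTest μ V → ∃ i, X ∉ ⋃ σ ∈ V i, cyl σ

/-- The granularity of a (continuous) measure: the least `ℓ` such that every
string of length `ℓ` has cylinder of measure `< 2⁻ⁿ`. -/
noncomputable def granularity (μ : Measure (ℕ → Bool)) (n : ℕ) : ℕ :=
  sInf {l | ∀ σ : List Bool, σ.length = l → μ (cyl σ) < 2⁻¹ ^ n}

lemma strTake_length (X : ℕ → Bool) (n : ℕ) : (strTake X n).length = n := by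
  simp [strTake]

lemma strTake_take (X : ℕ → Bool) {l n : ℕ} (h : l ≤ n) :
    (strTake X n).take l = strTake X l := by
  simp [strTake, ← List.map_take, List.take_range, Nat.min_eq_left h]

lemma strTake_succ (X : ℕ → Bool) (n : ℕ) :
    strTake X (n + 1) = strTake X n ++ [X n] := by
  simp [strTake, List.range_succ]

lemma mem_cyl_strTake (X : ℕ → Bool) (n : ℕ) : X ∈ cyl (strTake X n) := by
  simp only [cyl, Set.mem_setOf_eq, strTake_length]

lemma cyl_anti {σ τ : List Bool} (h : σ <+: τ) : cyl τ ⊆ cyl σ := by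
  intro Y hY
  simp only [cyl, Set.mem_setOf_eq] at *
  have hl : σ.length ≤ τ.length := h.length_le
  calc strTake Y σ.length = (strTake Y τ.length).take σ.length := (strTake_take Y hl).symm
    _ = τ.take σ.length := by rw [hY]
    _ = σ := by
        conv_rhs => rw [List.prefix_iff_eq_take.mp h]

lemma strTake_prefix (X : ℕ → Bool) {l n : ℕ} (h : l ≤ n) :
    strTake X l <+: strTake X n := by
  rw [← strTake_take X h]; exact List.take_prefix _ _

lemma cyl_eq_iInter (σ : List Bool) :
    cyl σ = ⋂ k ∈ Finset.range σ.length, {Y : ℕ → Bool | Y k = σ.getD k false} := by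
  ext Y
  simp only [cyl, Set.mem_setOf_eq, Set.mem_iInter, Finset.mem_range]
  constructor
  · intro h k hk
    have : (strTake Y σ.length)[k]'(by simpa [strTake_length] using hk) = σ[k] :=
      List.getElem_of_eq h _
    rw [List.getD_eq_getElem σ false hk, ← this]
    simp [strTake]
  · intro h
    apply List.ext_getElem (by simp [strTake_length])
    intro k hk1 hk2
    have := h k hk2
    rw [List.getD_eq_getElem σ false hk2] at this
    simpa [strTake] using this

lemma measurableSet_cyl (σ : List Bool) : MeasurableSet (cyl σ) := by
  rw [cyl_eq_iInter]
  refine MeasurableSet.biInter (Finset.range σ.length).countable_toSet (fun k _ => ?_)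
  exact measurable_pi_apply k (MeasurableSet.singleton _)


lemma semi_snoc {m : List Bool → ℝ} (hm : IsSemiMeasure m) (σ : List Bool) (b : Bool) :
    m (σ ++ [b]) ≤ m σ := by
  obtain ⟨-, hpos, hsup⟩ := hm
  have := hsup σ
  cases b
  · nlinarith [hpos (σ ++ [true])]
  · nlinarith [hpos (σ ++ [false])]

lemma semi_prefix {m : List Bool → ℝ} (hm : IsSemiMeasure m) {σ τ : List Bool}
    (h : σ <+: τ) : m τ ≤ m σ := by
  obtain ⟨ρ, rfl⟩ := h
  induction ρ using List.reverseRecOn with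
  | nil => simp
  | append_singleton ρ b ih =>
      calc m (σ ++ (ρ ++ [b])) = m ((σ ++ ρ) ++ [b]) := by rw [List.append_assoc]
        _ ≤ m (σ ++ ρ) := semi_snoc hm _ _
        _ ≤ m σ := ih

lemma semi_le_one {m : List Bool → ℝ} (hm : IsSemiMeasure m) (σ : List Bool) : m σ ≤ 1 := by
  have := semi_prefix hm (List.nil_prefix (l := σ))
  rw [hm.1] at this; exact this

/-- Kraft-type inequality: sum of a semimeasure over a finite antichain below `τ` is `≤ m τ`. -/
lemma semi_antichain_sum_aux {m : List Bool → ℝ} (hm : IsSemiMeasure m) :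
    ∀ (k : ℕ) (τ : List Bool) (S : Finset (List Bool)),
      (∀ σ ∈ S, τ <+: σ ∧ σ.length ≤ τ.length + k) →
      (∀ σ ∈ S, ∀ σ' ∈ S, σ <+: σ' → σ = σ') →
      ∑ σ ∈ S, m σ ≤ m τ := by
  intro k
  induction k with
  | zero =>
      intro τ S hpre hanti
      have hsub : S ⊆ {τ} := by
        intro σ hσ
        obtain ⟨hp, hl⟩ := hpre σ hσ
        have hlen : τ.length = σ.length := le_antisymm hp.length_le (by omega)
        have : τ = σ := by rw [List.prefix_iff_eq_take.mp hp, hlen, List.take_length]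
        simp [← this]
      calc ∑ σ ∈ S, m σ ≤ ∑ σ ∈ {τ}, m σ :=
            Finset.sum_le_sum_of_subset_of_nonneg hsub (fun σ _ _ => hm.2.1 σ)
        _ = m τ := Finset.sum_singleton _ _
  | succ k ih =>
      intro τ S hpre hanti
      by_cases hτ : τ ∈ S
      · have hsub : S = {τ} := by
          apply Finset.eq_singleton_iff_unique_mem.mpr
          refine ⟨hτ, fun σ hσ => (hanti τ hτ σ hσ (hpre σ hσ).1).symm⟩
        simp [hsub]
      · set S₀ := S.filter (fun σ => τ ++ [false] <+: σ) with hS₀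
        set S₁ := S.filter (fun σ => ¬ (τ ++ [false] <+: σ)) with hS₁
        have hsplit : ∑ σ ∈ S₀, m σ + ∑ σ ∈ S₁, m σ = ∑ σ ∈ S, m σ :=
          Finset.sum_filter_add_sum_filter_not S _ _
        have hext : ∀ σ ∈ S, ∃ b, τ ++ [b] <+: σ := by
          intro σ hσ
          obtain ⟨⟨ρ, rfl⟩, -⟩ := hpre σ hσ
          match ρ with
          | [] => exact absurd hσ (by simpa using hτ)
          | b :: ρ' => exact ⟨b, ⟨ρ', by simp⟩⟩
        have h0 : ∑ σ ∈ S₀, m σ ≤ m (τ ++ [false]) := by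
          apply ih (τ ++ [false])
          · intro σ hσ
            rw [hS₀, Finset.mem_filter] at hσ
            exact ⟨hσ.2, by have := (hpre σ hσ.1).2; simp; omega⟩
          · intro σ hσ σ' hσ'
            rw [hS₀, Finset.mem_filter] at hσ hσ'
            exact hanti σ hσ.1 σ' hσ'.1
        have h1 : ∑ σ ∈ S₁, m σ ≤ m (τ ++ [true]) := by
          apply ih (τ ++ [true])
          · intro σ hσ
            rw [hS₁, Finset.mem_filter] at hσ
            obtain ⟨b, hb⟩ := hext σ hσ.1
            cases b
            · exact absurd hb hσ.2
            · exact ⟨hb, by have := (hpre σ hσ.1).2; simp; omega⟩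
          · intro σ hσ σ' hσ'
            rw [hS₁, Finset.mem_filter] at hσ hσ'
            exact hanti σ hσ.1 σ' hσ'.1
        calc ∑ σ ∈ S, m σ = ∑ σ ∈ S₀, m σ + ∑ σ ∈ S₁, m σ := hsplit.symm
          _ ≤ m (τ ++ [false]) + m (τ ++ [true]) := add_le_add h0 h1
          _ ≤ m τ := hm.2.2 τ

lemma measure_biUnion_cyl_le (μ : Measure (ℕ → Bool)) {m : List Bool → ℝ}
    (hm : IsSemiMeasure m) (V : Set (List Bool)) (ε : ℝ) (hε : 0 ≤ ε)
    (h : ∀ σ ∈ V, μ (cyl σ) ≤ ENNReal.ofReal (ε * m σ)) :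
    μ (⋃ σ ∈ V, cyl σ) ≤ ENNReal.ofReal ε := by
  classical
  set A : Set (List Bool) := {σ ∈ V | ∀ τ, τ <+: σ → τ ∈ V → τ = σ} with hA
  have hAV : A ⊆ V := fun σ hσ => hσ.1
  -- the union over V is covered by the union over minimal elements A
  have hcover : (⋃ σ ∈ V, cyl σ) ⊆ ⋃ σ ∈ A, cyl σ := by
    intro Y hY
    simp only [Set.mem_iUnion, exists_prop] at hY ⊢
    obtain ⟨σ, hσV, hσY⟩ := hY
    set L : Set ℕ := {l | σ.take l ∈ V} with hL
    have hLne : L.Nonempty := ⟨σ.length, by simpa [hL, List.take_length] using hσV⟩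
    set l₀ := sInf L with hl₀
    have hl₀L : l₀ ∈ L := Nat.sInf_mem hLne
    have hl₀le : l₀ ≤ σ.length := by
      have : σ.length ∈ L := by simpa [hL, List.take_length] using hσV
      exact Nat.sInf_le this
    set τ := σ.take l₀ with hτ
    have hτlen : τ.length = l₀ := by simp [hτ, Nat.min_eq_left hl₀le]
    have hτV : τ ∈ V := hl₀L
    have hτσ : τ <+: σ := List.take_prefix _ _
    refine ⟨τ, ⟨hτV, ?_⟩, cyl_anti hτσ hσY⟩
    intro ρ hρτ hρV
    have hρσ : ρ <+: σ := hρτ.trans hτσ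
    have hρL : ρ.length ∈ L := by
      rw [hL, Set.mem_setOf_eq, ← List.prefix_iff_eq_take.mp hρσ]; exact hρV
    have h1 : l₀ ≤ ρ.length := Nat.sInf_le hρL
    have h2 : ρ.length ≤ l₀ := hτlen ▸ hρτ.length_le
    have hlen : ρ.length = τ.length := by omega
    rw [List.prefix_iff_eq_take.mp hρτ, hlen, List.take_length]
  have hAcount : A.Countable := Set.to_countable A
  calc μ (⋃ σ ∈ V, cyl σ) ≤ μ (⋃ σ ∈ A, cyl σ) := measure_mono hcover
    _ ≤ ∑' (σ : A), μ (cyl ↑σ) := measure_biUnion_le μ hAcount _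
    _ ≤ ENNReal.ofReal ε := by
        rw [ENNReal.tsum_eq_iSup_sum]
        apply iSup_le
        intro s
        set T : Finset (List Bool) := s.image Subtype.val with hT
        have hTA : ∀ σ ∈ T, σ ∈ A := by
          intro σ hσ
          rw [hT, Finset.mem_image] at hσ
          obtain ⟨x, -, rfl⟩ := hσ
          exact x.2
        have hsum : ∑ x ∈ s, μ (cyl ↑x) = ∑ σ ∈ T, μ (cyl σ) := by
          rw [hT, Finset.sum_image (fun x _ y _ h => Subtype.ext h)]
        rw [hsum]
        have hkraft : ∑ σ ∈ T, m σ ≤ 1 := by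
          have := semi_antichain_sum_aux hm (T.sup List.length) [] T
            (fun σ hσ => ⟨List.nil_prefix, by simpa using Finset.le_sup (f := List.length) hσ⟩)
            (fun σ hσ σ' hσ' hp => (hTA σ' hσ').2 σ hp ((hTA σ hσ).1))
          rwa [hm.1] at this
        calc ∑ σ ∈ T, μ (cyl σ) ≤ ∑ σ ∈ T, ENNReal.ofReal (ε * m σ) :=
              Finset.sum_le_sum (fun σ hσ => h σ (hAV (hTA σ hσ)))
          _ = ENNReal.ofReal (∑ σ ∈ T, ε * m σ) :=
              (ENNReal.ofReal_sum_of_nonneg (fun σ _ => mul_nonneg hε (hm.2.1 σ))).symm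
          _ ≤ ENNReal.ofReal ε := by
              apply ENNReal.ofReal_le_ofReal
              rw [← Finset.mul_sum]
              calc ε * ∑ σ ∈ T, m σ ≤ ε * 1 := mul_le_mul_of_nonneg_left hkraft hε
                _ = ε := mul_one ε


lemma concat_getD (L : List Bool) (c : Bool) (n : ℕ) (h : L.length = n) :
    (L ++ [c]).getD n false = c := by
  subst h; simp [List.getD, List.getElem?_concat_length]

/-- A choice-based path through a tree of "good" nodes. -/
noncomputable def chain (good : List Bool → Prop) (h0 : good [])
    (hstep : ∀ τ, good τ → ∃ b, good (τ ++ [b])) :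
    (n : ℕ) → {τ : List Bool // good τ ∧ τ.length = n}
  | 0 => ⟨[], h0, rfl⟩
  | n + 1 =>
      let p := chain good h0 hstep n
      ⟨p.1 ++ [Classical.choose (hstep p.1 p.2.1)],
        Classical.choose_spec (hstep p.1 p.2.1), by simp [p.2.2]⟩

open MeasureTheory in
lemma exists_level (μ : Measure (ℕ → Bool)) [IsProbabilityMeasure μ]
    (hcont : ∀ Y : ℕ → Bool, μ {Y} = 0) (ε : ENNReal) (hε : 0 < ε) :
    ∃ l, ∀ σ : List Bool, σ.length = l → μ (cyl σ) < ε := by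
  by_contra hcon
  push_neg at hcon
  have h : ∀ l, ∃ σ : List Bool, σ.length = l ∧ ε ≤ μ (cyl σ) := hcon
  set good : List Bool → Prop :=
    fun τ => ∀ l, ∃ σ, τ <+: σ ∧ σ.length = τ.length + l ∧ ε ≤ μ (cyl σ) with hgood
  have h0 : good [] := by
    intro l
    obtain ⟨σ, hσl, hσ⟩ := h l
    exact ⟨σ, List.nil_prefix, by simpa using hσl, hσ⟩
  have hstep : ∀ τ, good τ → ∃ b, good (τ ++ [b]) := by
    intro τ hτ
    by_contra hb
    push_neg at hb
    simp only [hgood, not_forall, not_exists, not_and] at hb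
    obtain ⟨l₀, hl₀⟩ := hb false
    obtain ⟨l₁, hl₁⟩ := hb true
    obtain ⟨σ, hpre, hlen, hmeas⟩ := hτ (max l₀ l₁ + 1)
    have hne : τ ≠ σ := by
      intro hconeq; rw [← hconeq] at hlen; omega
    obtain ⟨b, hbpre⟩ : ∃ b, τ ++ [b] <+: σ := by
      obtain ⟨ρ, rfl⟩ := hpre
      match ρ with
      | [] => exact absurd (by simp) hne
      | b :: ρ' => exact ⟨b, ⟨ρ', by simp⟩⟩
    set lb := if b then l₁ else l₀ with hlb
    set σ' := σ.take (τ.length + 1 + lb) with hσ'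
    have hlbmax : lb ≤ max l₀ l₁ := by cases b <;> simp [hlb]
    have hlble : τ.length + 1 + lb ≤ σ.length := by omega
    have hp1 : τ ++ [b] <+: σ' :=
      List.prefix_take_iff.mpr ⟨hbpre, by simp⟩
    have hl1 : σ'.length = (τ ++ [b]).length + lb := by
      simp [hσ', Nat.min_eq_left hlble]
    have hm1 : ε ≤ μ (cyl σ') :=
      le_trans hmeas (measure_mono (cyl_anti (List.take_prefix _ _)))
    cases b
    · exact hl₀ σ' hp1 hl1 hm1
    · exact hl₁ σ' hp1 hl1 hm1
  set F := chain good h0 hstep with hF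
  set X : ℕ → Bool := fun k => ((F (k + 1)).1).getD k false with hX
  have hFsucc : ∀ n, (F (n + 1)).1 = (F n).1 ++ [Classical.choose (hstep (F n).1 (F n).2.1)] := by
    intro n; rfl
  have hstr : ∀ n, strTake X n = (F n).1 := by
    intro n
    induction n with
    | zero => simp [strTake, hF, chain]
    | succ n ih =>
        rw [strTake_succ, ih, hFsucc n]
        congr 2
        show ((F (n + 1)).1).getD n false = _
        rw [hFsucc n]
        exact concat_getD _ _ _ (F n).2.2
  have hmeasX : ∀ n, ε ≤ μ (cyl (strTake X n)) := by
    intro n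
    obtain ⟨σ, hpre, hlen, hm⟩ := (F n).2.1 0
    have : (F n).1 = σ := by
      rw [List.prefix_iff_eq_take.mp hpre]
      have : (F n).1.length = σ.length := by omega
      rw [this, List.take_length]
    rw [hstr n, this]; exact hm
  have hsingle : {X} = ⋂ n, cyl (strTake X n) := by
    apply Set.eq_of_subset_of_subset
    · intro Y hY
      rw [Set.mem_singleton_iff] at hY
      subst hY
      exact Set.mem_iInter.mpr (fun n => mem_cyl_strTake _ n)
    · intro Y hY
      rw [Set.mem_iInter] at hY
      rw [Set.mem_singleton_iff]
      funext k
      have := hY (k + 1)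
      simp only [cyl, Set.mem_setOf_eq, strTake_length] at this
      have hk : k < k + 1 := Nat.lt_succ_self k
      calc Y k = (strTake Y (k+1)).getD k false := by
            rw [List.getD_eq_getElem _ _ (by simpa [strTake_length] using hk)]
            simp [strTake]
        _ = (strTake X (k+1)).getD k false := by rw [this]
        _ = X k := by
            rw [List.getD_eq_getElem _ _ (by simpa [strTake_length] using hk)]
            simp [strTake]
  have htend : Tendsto (fun n => μ (cyl (strTake X n))) atTop (nhds (μ (⋂ n, cyl (strTake X n)))) := by
    have := MeasureTheory.tendsto_measure_iInter_atTop (μ := μ)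
      (s := fun n => cyl (strTake X n))
      (fun n => (measurableSet_cyl _).nullMeasurableSet)
      (fun n m hnm => cyl_anti (strTake_prefix X hnm))
      ⟨0, measure_ne_top μ _⟩
    exact this
  have : ε ≤ μ (⋂ n, cyl (strTake X n)) := ge_of_tendsto' htend hmeasX
  rw [← hsingle, hcont X] at this
  exact absurd this (not_le.mpr hε)

lemma uniform_semi : IsSemiMeasure (fun σ : List Bool => ((2:ℝ) ^ σ.length)⁻¹) := by
  refine ⟨by simp, fun σ => by positivity, fun σ => ?_⟩
  simp only [List.length_append, List.length_cons, List.length_nil]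
  rw [pow_succ]
  have h : (0:ℝ) < 2 ^ σ.length := by positivity
  rw [mul_inv]
  ring_nf
  nlinarith [inv_pos.mpr h]

lemma uniform_leftCE : IsLeftCE (fun σ : List Bool => ((2:ℝ) ^ σ.length)⁻¹) := by
  refine ⟨fun p => if p.1.length ≤ p.2 then 2 ^ (p.2 - p.1.length) else 0, ?_, ?_, ?_⟩
  · have hpow : Primrec₂ ((· ^ ·) : ℕ → ℕ → ℕ) := Primrec₂.unpaired'.mp Nat.Primrec.pow
    have h1 : Primrec (fun p : List Bool × ℕ => p.1.length) :=
      Primrec.list_length.comp Primrec.fst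
    have h2 : Primrec (fun p : List Bool × ℕ => p.2) := Primrec.snd
    exact (Primrec.ite (Primrec.nat_le.comp h1 h2)
      (hpow.comp (Primrec.const 2) (Primrec.nat_sub.comp h2 h1)) (Primrec.const 0)).to_comp
  · intro σ i j hij
    simp only
    by_cases h1 : σ.length ≤ i
    · rw [if_pos h1, if_pos (h1.trans hij)]
      apply le_of_eq
      push_cast
      rw [div_eq_div_iff (by positivity) (by positivity), ← pow_add, ← pow_add]
      congr 1
      omega
    · rw [if_neg h1]
      simp only [Nat.cast_zero, zero_div]
      positivity
  · intro σ
    apply tendsto_atTop_of_eventually_const (i₀ := σ.length)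
    intro i hi
    simp only
    rw [if_pos hi]
    push_cast
    rw [eq_comm, inv_eq_iff_eq_inv, eq_comm, inv_div, div_eq_iff (by positivity), ← pow_add]
    congr 1
    omega

/-- The key KA lower bound computation. -/
lemma ka_bound {M : List Bool → ℝ} {σ : List Bool} (hpos : 0 < M σ)
    {c k : ℕ} (hle : M σ ≤ 2 ^ c * (2:ℝ)⁻¹ ^ k) :
    (k : ℝ) - c ≤ - Real.logb 2 (M σ) := by
  have hrpos : (0:ℝ) < 2 ^ c * (2:ℝ)⁻¹ ^ k := by positivity
  have h1 : Real.logb 2 (M σ) ≤ Real.logb 2 (2 ^ c * (2:ℝ)⁻¹ ^ k) :=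
    (Real.logb_le_logb (by norm_num) hpos hrpos).mpr hle
  have h2 : Real.logb 2 ((2:ℝ) ^ c * (2:ℝ)⁻¹ ^ k) = (c : ℝ) - k := by
    rw [Real.logb_mul (by positivity) (by positivity), Real.logb_pow, Real.logb_pow,
      Real.logb_inv, Real.logb_self_eq_one (by norm_num)]
    ring
  rw [h2] at h1
  linarith

lemma test_repred (f g : List Bool × ℕ → ℕ) (hfc : Computable f) (hgc : Computable g) :
    REPred (fun p : ℕ × List Bool => ∃ j, 2 ^ p.1 * (g (p.2, j) + 1) < f (p.2, j)) := by
  classical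
  set dec : ℕ × List Bool → ℕ → Bool :=
    fun p j => decide (2 ^ p.1 * (g (p.2, j) + 1) < f (p.2, j)) with hdec
  have hlt : Computable₂ dec := by
    have hpow : Primrec₂ ((· ^ ·) : ℕ → ℕ → ℕ) := Primrec₂.unpaired'.mp Nat.Primrec.pow
    have hpowc : Computable (fun x : (ℕ × List Bool) × ℕ => 2 ^ x.1.1) :=
      (hpow.comp (Primrec.const 2) (Primrec.fst.comp Primrec.fst)).to_comp
    have hg' : Computable (fun x : (ℕ × List Bool) × ℕ => g (x.1.2, x.2)) :=
      hgc.comp (Computable.pair (Computable.snd.comp Computable.fst) Computable.snd)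
    have hf' : Computable (fun x : (ℕ × List Bool) × ℕ => f (x.1.2, x.2)) :=
      hfc.comp (Computable.pair (Computable.snd.comp Computable.fst) Computable.snd)
    have hA : Computable (fun x : (ℕ × List Bool) × ℕ => 2 ^ x.1.1 * (g (x.1.2, x.2) + 1)) :=
      Primrec.nat_mul.to_comp.comp hpowc (Primrec.succ.to_comp.comp hg')
    exact Primrec.nat_lt.decide.to_comp.comp hA hf'
  have h1 : Partrec fun p : ℕ × List Bool =>
      (Nat.rfind (fun j => Part.some (dec p j))).map (fun _ => ()) :=
    (Partrec.rfind hlt.partrec₂).map (Computable.to₂ (Computable.const ()))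
  apply h1.of_eq
  intro p
  apply Part.ext
  intro u
  simp only [Part.mem_map_iff, Part.mem_assert_iff]
  constructor
  · rintro ⟨n, hn, -⟩
    have hspec := Nat.rfind_spec hn
    simp only [hdec, Part.mem_some_iff, eq_comm (a := true), decide_eq_true_eq] at hspec
    exact ⟨⟨n, hspec⟩, Part.mem_some_iff.mpr (Subsingleton.elim _ _)⟩
  · rintro ⟨⟨j, hj⟩, -⟩
    have hdom : (Nat.rfind (fun j => Part.some (dec p j))).Dom := by
      apply Nat.rfind_dom.mpr
      exact ⟨j, by simp [hdec, hj], fun _ => trivial⟩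
    exact ⟨_, Part.get_mem hdom, trivial⟩

theorem stmt12 (M : List Bool → ℝ) (hM : IsUniversalSemiMeasure M)
    (μ : Measure (ℕ → Bool)) (hprob : IsProbabilityMeasure μ)
    (hcomp : ComputableMeasure μ) (hcont : ∀ Y : ℕ → Bool, μ {Y} = 0)
    (X : ℕ → Bool) (hX : MLRandom μ X) :
    ∃ c : ℕ, (∀ n : ℕ, (n : ℝ) - c ≤ KA M (strTake X (granularity μ n))) ∧
      ∀ n : ℕ, (ordInv (granularity μ) n : ℝ) - c ≤ KA M (strTake X n) := by
  classical
  haveI := hprob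
  obtain ⟨hMsemi, hMce, huniv⟩ := hM
  obtain ⟨d, hd⟩ := huniv _ uniform_semi uniform_leftCE
  have hMpos : ∀ σ, 0 < M σ := by
    intro σ
    have h1 := hd σ
    have h2 : (0:ℝ) < ((2:ℝ) ^ σ.length)⁻¹ := by positivity
    nlinarith [pow_pos (show (0:ℝ) < 2 by norm_num) d]
  obtain ⟨f, hfc, hfm, hft⟩ := hMce
  obtain ⟨g, hgc, hg⟩ := hcomp
  set V : ℕ → Set (List Bool) := fun i => {σ | ∃ j, 2 ^ i * (g (σ, j) + 1) < f (σ, j)} with hV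
  have hVmeas : ∀ i, ∀ σ ∈ V i, μ (cyl σ) ≤ ENNReal.ofReal ((2:ℝ)⁻¹ ^ i * M σ) := by
    intro i σ hσ
    obtain ⟨j, hj⟩ := hσ
    set ν := (μ (cyl σ)).toReal with hν
    have hν0 : 0 ≤ ν := ENNReal.toReal_nonneg
    have hfM : (f (σ, j) : ℝ) / 2 ^ j ≤ M σ := Monotone.ge_of_tendsto (hfm σ) (hft σ) j
    have hgν : ν ≤ (g (σ, j) : ℝ) / 2 ^ j + (2:ℝ)⁻¹ ^ j := by
      have h := abs_le.mp (hg σ j)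
      linarith [h.1]
    have hcast : (2:ℝ) ^ i * ((g (σ, j) : ℝ) + 1) < (f (σ, j) : ℝ) := by
      have := (Nat.cast_lt (α := ℝ)).mpr hj
      push_cast at this
      linarith
    have h2j : (0:ℝ) < 2 ^ j := by positivity
    have e1 : (2:ℝ)⁻¹ ^ j = 1 / 2 ^ j := by rw [inv_pow, one_div]
    have hkey : 2 ^ i * ν < M σ := by
      calc 2 ^ i * ν ≤ 2 ^ i * ((g (σ, j) : ℝ) / 2 ^ j + (2:ℝ)⁻¹ ^ j) :=
            mul_le_mul_of_nonneg_left hgν (by positivity)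
        _ = 2 ^ i * ((g (σ, j) : ℝ) + 1) / 2 ^ j := by rw [e1]; field_simp
        _ < (f (σ, j) : ℝ) / 2 ^ j := by gcongr
        _ ≤ M σ := hfM
    have hii : (2:ℝ)⁻¹ ^ i * 2 ^ i = 1 := by
      rw [inv_pow, inv_mul_cancel₀ (by positivity)]
    have hν' : ν < (2:ℝ)⁻¹ ^ i * M σ := by
      have hp : (0:ℝ) < (2:ℝ)⁻¹ ^ i := by positivity
      calc ν = (2:ℝ)⁻¹ ^ i * (2 ^ i * ν) := by rw [← mul_assoc, hii, one_mul]
        _ < (2:ℝ)⁻¹ ^ i * M σ := mul_lt_mul_of_pos_left hkey hp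
    calc μ (cyl σ) = ENNReal.ofReal ν := (ENNReal.ofReal_toReal (measure_ne_top μ _)).symm
      _ ≤ ENNReal.ofReal ((2:ℝ)⁻¹ ^ i * M σ) := ENNReal.ofReal_le_ofReal hν'.le
  have hofreal : ∀ i : ℕ, ENNReal.ofReal ((2:ℝ)⁻¹ ^ i) = (2 : ENNReal)⁻¹ ^ i := by
    intro i
    rw [ENNReal.ofReal_pow (by norm_num)]
    congr 1
    rw [ENNReal.ofReal_inv_of_pos (by norm_num)]
    norm_num
  have htest : MLTest μ V := by
    constructor
    · exact test_repred f g hfc hgc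
    · intro i
      have := measure_biUnion_cyl_le μ hMsemi (V i) ((2:ℝ)⁻¹ ^ i) (by positivity) (hVmeas i)
      rwa [hofreal i] at this
  obtain ⟨i, hi⟩ := hX V htest
  have hfail : ∀ n, M (strTake X n) ≤ 2 ^ i * (μ (cyl (strTake X n))).toReal := by
    intro n
    set σ := strTake X n with hσdef
    have hnot : σ ∉ V i := by
      intro hmem
      exact hi (Set.mem_biUnion hmem (mem_cyl_strTake X n))
    rw [hV] at hnot
    simp only [Set.mem_setOf_eq, not_exists, not_lt] at hnot
    set ν := (μ (cyl σ)).toReal with hν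
    have hb : ∀ j : ℕ, (f (σ, j) : ℝ) / 2 ^ j ≤ 2 ^ i * (ν + 2 * (2:ℝ)⁻¹ ^ j) := by
      intro j
      have h1 : (f (σ, j) : ℝ) ≤ 2 ^ i * ((g (σ, j) : ℝ) + 1) := by
        have := (Nat.cast_le (α := ℝ)).mpr (hnot j)
        push_cast at this
        linarith
      have h2 : (g (σ, j) : ℝ) / 2 ^ j ≤ ν + (2:ℝ)⁻¹ ^ j := by
        have h := abs_le.mp (hg σ j)
        linarith [h.2]
      have h2j : (0:ℝ) < 2 ^ j := by positivity
      have e1 : (2:ℝ)⁻¹ ^ j = 1 / 2 ^ j := by rw [inv_pow, one_div]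
      have hq : (0:ℝ) ≤ (2:ℝ)⁻¹ ^ j := by positivity
      calc (f (σ, j) : ℝ) / 2 ^ j ≤ 2 ^ i * ((g (σ, j) : ℝ) + 1) / 2 ^ j := by gcongr
        _ = 2 ^ i * ((g (σ, j) : ℝ) / 2 ^ j + (2:ℝ)⁻¹ ^ j) := by rw [e1]; field_simp
        _ ≤ 2 ^ i * (ν + 2 * (2:ℝ)⁻¹ ^ j) :=
            mul_le_mul_of_nonneg_left (by linarith) (by positivity)
    have hz : Tendsto (fun j : ℕ => (2:ℝ)⁻¹ ^ j) atTop (nhds 0) :=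
      tendsto_pow_atTop_nhds_zero_of_lt_one (by norm_num) (by norm_num)
    have hlim : Tendsto (fun j : ℕ => 2 ^ i * (ν + 2 * (2:ℝ)⁻¹ ^ j)) atTop
        (nhds (2 ^ i * (ν + 2 * 0))) := ((hz.const_mul 2).const_add ν).const_mul _
    have := le_of_tendsto_of_tendsto' (hft σ) hlim hb
    simpa using this
  have hgran : ∀ n, ∀ σ : List Bool, σ.length = granularity μ n → μ (cyl σ) < 2⁻¹ ^ n := by
    intro n
    have hε : (0 : ENNReal) < 2⁻¹ ^ n := by
      rw [← ENNReal.inv_pow]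
      exact ENNReal.inv_pos.mpr (ENNReal.pow_ne_top (by norm_num))
    obtain ⟨l, hl⟩ := exists_level μ hcont (2⁻¹ ^ n) hε
    have := Nat.sInf_mem
      (s := {l | ∀ σ : List Bool, σ.length = l → μ (cyl σ) < 2⁻¹ ^ n}) ⟨l, hl⟩
    exact this
  have htoReal : ∀ (s : Set (ℕ → Bool)) (n : ℕ),
      μ s < 2⁻¹ ^ n → (μ s).toReal < (2:ℝ)⁻¹ ^ n := by
    intro s n h
    have hne : ((2 : ENNReal)⁻¹ ^ n) ≠ ⊤ := by
      rw [← ENNReal.inv_pow]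
      exact ENNReal.inv_ne_top.mpr (by positivity)
    have := ENNReal.toReal_strict_mono hne h
    simpa [ENNReal.toReal_pow, ENNReal.toReal_inv] using this
  refine ⟨i + 1, ?_, ?_⟩
  · intro n
    set σ := strTake X (granularity μ n) with hσdef
    have hlen : σ.length = granularity μ n := strTake_length _ _
    have h1 : (μ (cyl σ)).toReal < (2:ℝ)⁻¹ ^ n := htoReal _ n (hgran n σ hlen)
    have h0 : 0 ≤ (μ (cyl σ)).toReal := ENNReal.toReal_nonneg
    have h2 : M σ ≤ 2 ^ (i + 1) * (2:ℝ)⁻¹ ^ n := by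
      have h3 := hfail (granularity μ n)
      rw [← hσdef] at h3
      have hp : (0:ℝ) < 2 ^ i := by positivity
      have hq : (0:ℝ) < (2:ℝ)⁻¹ ^ n := by positivity
      calc M σ ≤ 2 ^ i * (μ (cyl σ)).toReal := h3
        _ ≤ 2 ^ i * (2:ℝ)⁻¹ ^ n := mul_le_mul_of_nonneg_left h1.le hp.le
        _ ≤ 2 ^ (i + 1) * (2:ℝ)⁻¹ ^ n := by
            apply mul_le_mul_of_nonneg_right _ hq.le
            apply pow_le_pow_right₀ (by norm_num)
            omega
    have hka := ka_bound (hMpos σ) h2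
    have : KA M σ = - Real.logb 2 (M σ) := rfl
    rw [this]
    push_cast at hka ⊢
    linarith
  · intro n
    set σ := strTake X n with hσdef
    have hKA : KA M σ = - Real.logb 2 (M σ) := rfl
    by_cases hm0 : ordInv (granularity μ) n = 0
    · rw [hm0]
      have h2 : M σ ≤ 2 ^ (i + 1) * (2:ℝ)⁻¹ ^ 0 := by
        have := semi_le_one hMsemi σ
        have hp : (1:ℝ) ≤ 2 ^ (i + 1) := one_le_pow₀ (by norm_num)
        simp only [pow_zero, mul_one]
        linarith
      have hka := ka_bound (hMpos σ) (k := 0) h2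
      rw [hKA]
      push_cast at hka ⊢
      linarith
    · obtain ⟨k, hk⟩ : ∃ k, ordInv (granularity μ) n = k + 1 :=
        ⟨ordInv (granularity μ) n - 1, by omega⟩
      have hnotmem : k ∉ {j | n ≤ granularity μ j} := by
        apply Nat.notMem_of_lt_sInf
        rw [ordInv] at hk
        exact lt_of_lt_of_le (Nat.lt_succ_self k) (le_of_eq hk.symm)
      have hgk : granularity μ k < n := by
        have h := hnotmem
        simp only [Set.mem_setOf_eq] at h
        exact not_le.mp h
      have hsub : cyl σ ⊆ cyl (strTake X (granularity μ k)) :=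
        cyl_anti (strTake_prefix X hgk.le)
      have hlt : μ (cyl σ) < 2⁻¹ ^ k :=
        lt_of_le_of_lt (measure_mono hsub) (hgran k _ (strTake_length _ _))
      have h1 : (μ (cyl σ)).toReal < (2:ℝ)⁻¹ ^ k := htoReal _ _ hlt
      have h2 : M σ ≤ 2 ^ (i + 1) * (2:ℝ)⁻¹ ^ (k + 1) := by
        rw [pow_succ, pow_succ]
        have h3 := hfail n
        rw [← hσdef] at h3
        have hp : (0:ℝ) < 2 ^ i := by positivity
        calc M σ ≤ 2 ^ i * (μ (cyl σ)).toReal := h3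
          _ ≤ 2 ^ i * (2:ℝ)⁻¹ ^ k := mul_le_mul_of_nonneg_left h1.le hp.le
          _ = 2 ^ i * 2 * ((2:ℝ)⁻¹ ^ k * 2⁻¹) := by ring_nf
      have hka := ka_bound (hMpos σ) h2
      rw [hKA, hk]
      push_cast at hka ⊢
      linarith
end
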